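/- (Higman's lemma) If (Q, ≤) is a well quasi-order, then the set Q* of finite sequences over Q is a well quasi-order under the subsequence-embedding order: p_1...p_n ≤* q_1...q_m iff there exist 1 ≤ i_1 < ... < i_n ≤ m with p_k ≤ q_{i_k} for all k. -/

import Mathlib

def IsWqo {α : Type*} (r : α → α → Prop) : Prop :=
  ∀ f : ℕ → α, ∃ i j : ℕ, i < j ∧ r (f i) (f j)

/-- Higman's embedding order on finite sequences: `l₁ ≤* l₂` iff the elements of `l₁`
can be matched, in order, with `r`-larger elements of a subsequence of `l₂`. -/
def HigmanLE {α : Type*} (r : α → α → Prop) (l₁ l₂ : List α) : Prop :=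
  ∃ l' : List α, l'.Sublist l₂ ∧ List.Forall₂ r l₁ l'

/-- Higman's lemma: if (Q, ≤) is a wqo then Q* with the
subsequence-embedding order is a wqo. -/
theorem higman_lemma {Q : Type*} (r : Q → Q → Prop)
    (hrefl : Reflexive r) (htrans : Transitive r)
    (hwqo : IsWqo r) :
    IsWqo (HigmanLE r) := by
  haveI : Std.Refl r := ⟨hrefl⟩
  haveI : IsTrans Q r := ⟨htrans⟩
  haveI : IsPreorder Q r := { refl := hrefl, trans := htrans }
  have h : (Set.univ : Set Q).PartiallyWellOrderedOn r := Set.partiallyWellOrderedOn_iff_exists_lt.2 fun f _ => hwqo f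
  have h2 := h.partiallyWellOrderedOn_sublistForall₂ r
  intro f
  obtain ⟨m, n, hmn, hr⟩ := h2.exists_lt (f := f) (by simp)
  refine ⟨m, n, hmn, ?_⟩
  obtain ⟨l', h1, h2'⟩ := List.sublistForall₂_iff.1 hr
  exact ⟨l', h2', h1⟩
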